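/- Let α₁ > 1/2. Then there exist constants c > 0, C > 0 and λ₀ ∈ (0,1) such that for every λ ∈ (0,λ₀), λ · ∑_{p ∈ ℤ², 1+|p|² > λ^{−2α₁}} 1/(exp(λ(1+|p|²)) − 1) ≤ C · exp(−c λ^{1−2α₁}). -/

import Mathlib

open scoped ENNReal

/-- Squared Euclidean norm on `ℤ²`. -/
noncomputable def nsq (p : ℤ × ℤ) : ℝ := (p.1 : ℝ) ^ 2 + (p.2 : ℝ) ^ 2

/-- Exponential smallness of the free high-frequency tail at the second cutoff
`Λ₁ = λ^{-α₁}`, for `α₁ > 1/2`. -/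
theorem free_high_frequency_tail_exponential (α₁ : ℝ) (hα : 1 / 2 < α₁) :
    ∃ c C lam₀ : ℝ, 0 < c ∧ 0 < C ∧ lam₀ ∈ Set.Ioo (0 : ℝ) 1 ∧
      ∀ lam : ℝ, lam ∈ Set.Ioo (0 : ℝ) lam₀ →
        ENNReal.ofReal lam *
          ∑' p : {p : ℤ × ℤ // lam ^ (-(2 * α₁)) < 1 + nsq p},
            ENNReal.ofReal (1 / (Real.exp (lam * (1 + nsq p.1)) - 1)) ≤
        ENNReal.ofReal (C * Real.exp (-(c * lam ^ (1 - 2 * α₁)))) := by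
  set β : ℝ := 2 * α₁ - 1 with hβdef
  have hβ : 0 < β := by simp only [hβdef]; linarith
  set k : ℕ := ⌈1 / β⌉₊ with hkdef
  have hk : 1 ≤ β * k := by
    have h1 : 1 / β ≤ (k : ℝ) := Nat.le_ceil _
    rw [div_le_iff₀ hβ] at h1
    linarith [h1]
  refine ⟨1 / 4, 128 * 4 ^ k * (Nat.factorial k : ℝ), 1 / 2, by norm_num,
    mul_pos (by positivity) (Nat.cast_pos.mpr k.factorial_pos), ⟨by norm_num, by norm_num⟩, ?_⟩
  rintro lam ⟨hl0, hl2⟩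
  have hl1 : lam ≤ 1 := by linarith
  set t : ℝ := lam ^ (1 - 2 * α₁) with htdef
  have ht1 : 1 ≤ t := Real.one_le_rpow_of_pos_of_le_one_of_nonpos hl0 hl1 (by linarith)
  have ht0 : 0 < t := lt_of_lt_of_le one_pos ht1
  -- pointwise real bound
  have key : ∀ p : ℤ × ℤ, lam ^ (-(2 * α₁)) < 1 + nsq p →
      1 / (Real.exp (lam * (1 + nsq p)) - 1) ≤
        2 * Real.exp (-(t / 2)) * Real.exp (-(lam / 2 * nsq p)) := by
    intro p hp
    have hnsq : 0 ≤ nsq p := by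
      simp only [nsq]; positivity
    set x : ℝ := lam * (1 + nsq p) with hxdef
    have htx : t ≤ x := by
      have : t = lam * lam ^ (-(2 * α₁)) := by
        rw [htdef, show (1 : ℝ) - 2 * α₁ = 1 + -(2 * α₁) by ring, Real.rpow_add hl0,
          Real.rpow_one]
      rw [this, hxdef]
      exact mul_le_mul_of_nonneg_left hp.le hl0.le
    have hx1 : 1 ≤ x := le_trans ht1 htx
    have hx2 : (2 : ℝ) ≤ Real.exp x := by
      have := Real.add_one_le_exp x; linarith
    have hden : Real.exp x / 2 ≤ Real.exp x - 1 := by linarith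
    have hdenpos : 0 < Real.exp x / 2 := by positivity
    have h1 : 1 / (Real.exp x - 1) ≤ 1 / (Real.exp x / 2) :=
      one_div_le_one_div_of_le hdenpos hden
    have h2 : 1 / (Real.exp x / 2) = 2 * Real.exp (-x) := by
      rw [Real.exp_neg]; field_simp
    have h3 : Real.exp (-x) = Real.exp (-(x / 2)) * Real.exp (-(x / 2)) := by
      rw [← Real.exp_add]; ring_nf
    have h4 : Real.exp (-(x / 2)) ≤ Real.exp (-(t / 2)) :=
      Real.exp_le_exp.mpr (by linarith)
    have h5 : Real.exp (-(x / 2)) ≤ Real.exp (-(lam / 2 * nsq p)) := by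
      apply Real.exp_le_exp.mpr
      have : lam / 2 * nsq p ≤ x / 2 := by
        rw [hxdef]; nlinarith
      linarith
    calc 1 / (Real.exp x - 1) ≤ 2 * Real.exp (-x) := by rw [← h2]; exact h1
      _ = 2 * (Real.exp (-(x / 2)) * Real.exp (-(x / 2))) := by rw [← h3]
      _ ≤ 2 * (Real.exp (-(t / 2)) * Real.exp (-(lam / 2 * nsq p))) := by
          have e1 : 0 ≤ Real.exp (-(x / 2)) := (Real.exp_pos _).le
          have e2 : 0 ≤ Real.exp (-(t / 2)) := (Real.exp_pos _).le
          nlinarith [mul_le_mul h4 h5 e1 e2]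
      _ = 2 * Real.exp (-(t / 2)) * Real.exp (-(lam / 2 * nsq p)) := by ring
  -- notation for the ENNReal pieces
  set g : ℤ × ℤ → ℝ≥0∞ := fun p => ENNReal.ofReal (Real.exp (-(lam / 2 * nsq p))) with hgdef
  set f : ℤ → ℝ≥0∞ := fun n => ENNReal.ofReal (Real.exp (-(lam / 2 * (n : ℝ) ^ 2))) with hfdef
  set S : ℝ≥0∞ := ∑' n : ℤ, f n with hSdef
  set A : ℝ≥0∞ := ENNReal.ofReal (2 * Real.exp (-(t / 2))) with hAdef
  -- the product structure
  have hGS : (∑' p : ℤ × ℤ, g p) = S * S := by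
    rw [ENNReal.tsum_prod']
    have hab : ∀ a b : ℤ, g (a, b) = f a * f b := by
      intro a b
      have : Real.exp (-(lam / 2 * nsq (a, b))) =
          Real.exp (-(lam / 2 * (a : ℝ) ^ 2)) * Real.exp (-(lam / 2 * (b : ℝ) ^ 2)) := by
        rw [← Real.exp_add]
        congr 1
        simp only [nsq]
        ring
      rw [hgdef, hfdef]
      simp only [this, ENNReal.ofReal_mul (Real.exp_pos _).le]
    calc (∑' (a : ℤ) (b : ℤ), g (a, b)) = ∑' a : ℤ, (f a * ∑' b : ℤ, f b) := by
          simp_rw [hab, ENNReal.tsum_mul_left]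
      _ = S * S := by rw [← hSdef, ENNReal.tsum_mul_right]
  -- bound on S
  have hS : S ≤ ENNReal.ofReal (8 / lam) := by
    set q : ℝ≥0∞ := ENNReal.ofReal (Real.exp (-(lam / 2))) with hqdef
    have hq1 : q ≤ 1 := by
      rw [hqdef]
      refine ENNReal.ofReal_le_one.mpr ?_
      calc Real.exp (-(lam / 2)) ≤ Real.exp 0 := Real.exp_le_exp.mpr (by linarith)
        _ = 1 := Real.exp_zero
    have hterm : ∀ n : ℤ, f n ≤ q ^ n.natAbs := by
      intro n
      rw [hfdef, hqdef, ← ENNReal.ofReal_pow (Real.exp_pos _).le, ← Real.exp_nat_mul]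
      apply ENNReal.ofReal_le_ofReal
      apply Real.exp_le_exp.mpr
      have h1 : ((n.natAbs : ℝ)) ≤ (n : ℝ) ^ 2 := by
        have h2 : ((n.natAbs : ℝ)) ^ 2 = (n : ℝ) ^ 2 := by
          rw [Nat.cast_natAbs (α := ℝ)]
          rw [Int.cast_abs]
          exact sq_abs ((n : ℝ))
        rcases eq_or_ne n 0 with rfl | hn
        · norm_num
        · have : 1 ≤ n.natAbs := Nat.one_le_iff_ne_zero.mpr (Int.natAbs_ne_zero.mpr hn)
          have h3 : n.natAbs ≤ n.natAbs ^ 2 := Nat.le_self_pow two_ne_zero _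
          have h4 : ((n.natAbs : ℝ)) ≤ ((n.natAbs : ℝ)) ^ 2 := by exact_mod_cast h3
          linarith [h2 ▸ h4]
      nlinarith
    have hr4 : lam / 4 ≤ 1 - Real.exp (-(lam / 2)) := by
      have hE := Real.add_one_le_exp (lam / 2)
      have hmul : Real.exp (-(lam / 2)) * Real.exp (lam / 2) = 1 := by
        rw [← Real.exp_add]; norm_num
      nlinarith [Real.exp_pos (-(lam / 2)), Real.exp_pos (lam / 2)]
    have hinv : (1 - q)⁻¹ ≤ ENNReal.ofReal (4 / lam) := by
      have h1 : ENNReal.ofReal (lam / 4) ≤ 1 - q := by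
        rw [hqdef, ← ENNReal.ofReal_one, ← ENNReal.ofReal_sub _ (Real.exp_pos _).le]
        exact ENNReal.ofReal_le_ofReal hr4
      calc (1 - q)⁻¹ ≤ (ENNReal.ofReal (lam / 4))⁻¹ := ENNReal.inv_le_inv' h1
        _ = ENNReal.ofReal ((lam / 4)⁻¹) := (ENNReal.ofReal_inv_of_pos (by positivity)).symm
        _ = ENNReal.ofReal (4 / lam) := by rw [inv_div]
    have hsplit : (∑' n : ℤ, q ^ n.natAbs) =
        (∑' n : ℕ, q ^ (n : ℤ).natAbs) + ∑' n : ℕ, q ^ (-((n : ℤ) + 1)).natAbs :=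
      tsum_of_nat_of_neg_add_one ENNReal.summable ENNReal.summable
    have hgeo : (∑' n : ℕ, q ^ n) = (1 - q)⁻¹ := ENNReal.tsum_geometric q
    have hpart1 : (∑' n : ℕ, q ^ (n : ℤ).natAbs) ≤ (1 - q)⁻¹ := by
      simp only [Int.natAbs_natCast]
      exact le_of_eq hgeo
    have hpart2 : (∑' n : ℕ, q ^ (-((n : ℤ) + 1)).natAbs) ≤ (1 - q)⁻¹ := by
      have heq : ∀ n : ℕ, (-((n : ℤ) + 1)).natAbs = n + 1 := by
        intro n
        rw [Int.natAbs_neg]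
        exact_mod_cast Int.natAbs_natCast (n + 1)
      calc (∑' n : ℕ, q ^ (-((n : ℤ) + 1)).natAbs) = ∑' n : ℕ, q ^ (n + 1) := by
            simp_rw [heq]
        _ ≤ ∑' n : ℕ, q ^ n := by
            refine ENNReal.tsum_le_tsum fun n => ?_
            calc q ^ (n + 1) = q ^ n * q := pow_succ q n
              _ ≤ q ^ n * 1 := mul_le_mul_right hq1 _
              _ = q ^ n := mul_one _
        _ = (1 - q)⁻¹ := hgeo
    calc S ≤ ∑' n : ℤ, q ^ n.natAbs := ENNReal.tsum_le_tsum hterm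
      _ = (∑' n : ℕ, q ^ (n : ℤ).natAbs) + ∑' n : ℕ, q ^ (-((n : ℤ) + 1)).natAbs := hsplit
      _ ≤ (1 - q)⁻¹ + (1 - q)⁻¹ := add_le_add hpart1 hpart2
      _ ≤ ENNReal.ofReal (4 / lam) + ENNReal.ofReal (4 / lam) := add_le_add hinv hinv
      _ = ENNReal.ofReal (8 / lam) := by
          rw [← ENNReal.ofReal_add (by positivity) (by positivity)]
          congr 1
          ring
  -- the inequality controlling 1/lam by the exponential
  have hinvlam : 1 / lam ≤ 4 ^ k * (Nat.factorial k : ℝ) * Real.exp (t / 4) := by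
    have h1 : (t / 4) ^ k / (Nat.factorial k : ℝ) ≤ Real.exp (t / 4) :=
      Real.pow_div_factorial_le_exp (t / 4) (by positivity) k
    have ht : t ^ k = lam ^ (-(β * (k : ℝ))) := by
      rw [htdef, show (1 : ℝ) - 2 * α₁ = -β by rw [hβdef]; ring,
        ← Real.rpow_natCast (lam ^ (-β)) k, ← Real.rpow_mul hl0.le]
      congr 1
      ring
    have h2 : 1 / lam ≤ t ^ k := by
      rw [ht, one_div, ← Real.rpow_neg_one lam]
      exact Real.rpow_le_rpow_of_exponent_ge hl0 hl1 (by linarith)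
    have h3 : (t / 4) ^ k = t ^ k / 4 ^ k := div_pow t 4 k
    have h4 : t ^ k ≤ 4 ^ k * (Nat.factorial k : ℝ) * Real.exp (t / 4) := by
      have hfk : (0 : ℝ) < (Nat.factorial k : ℝ) := Nat.cast_pos.mpr k.factorial_pos
      have h4k : (0 : ℝ) < 4 ^ k := by positivity
      rw [h3, div_div] at h1
      calc t ^ k = (t ^ k / (4 ^ k * (Nat.factorial k : ℝ))) *
            (4 ^ k * (Nat.factorial k : ℝ)) := by field_simp
        _ ≤ Real.exp (t / 4) * (4 ^ k * (Nat.factorial k : ℝ)) := by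
            apply mul_le_mul_of_nonneg_right h1 (by positivity)
        _ = 4 ^ k * (Nat.factorial k : ℝ) * Real.exp (t / 4) := by ring
    linarith
  -- assemble
  have hptwise : ∀ p : {p : ℤ × ℤ // lam ^ (-(2 * α₁)) < 1 + nsq p},
      ENNReal.ofReal (1 / (Real.exp (lam * (1 + nsq p.1)) - 1)) ≤ A * g p.1 := by
    intro p
    rw [hAdef, hgdef, ← ENNReal.ofReal_mul (by positivity)]
    exact ENNReal.ofReal_le_ofReal (key p.1 p.2)
  calc ENNReal.ofReal lam *
        ∑' p : {p : ℤ × ℤ // lam ^ (-(2 * α₁)) < 1 + nsq p},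
          ENNReal.ofReal (1 / (Real.exp (lam * (1 + nsq p.1)) - 1))
      ≤ ENNReal.ofReal lam *
        ∑' p : {p : ℤ × ℤ // lam ^ (-(2 * α₁)) < 1 + nsq p}, A * g p.1 :=
        mul_le_mul_right (ENNReal.tsum_le_tsum hptwise) _
    _ = ENNReal.ofReal lam *
        (A * ∑' p : {p : ℤ × ℤ // lam ^ (-(2 * α₁)) < 1 + nsq p}, g p.1) := by
        rw [ENNReal.tsum_mul_left]
    _ ≤ ENNReal.ofReal lam * (A * ∑' p : ℤ × ℤ, g p) := by
        refine mul_le_mul_right (mul_le_mul_right ?_ _) _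
        exact ENNReal.tsum_comp_le_tsum_of_injective Subtype.val_injective g
    _ = ENNReal.ofReal lam * (A * (S * S)) := by rw [hGS]
    _ ≤ ENNReal.ofReal lam *
        (A * (ENNReal.ofReal (8 / lam) * ENNReal.ofReal (8 / lam))) := by
        refine mul_le_mul_right (mul_le_mul_right ?_ _) _
        exact mul_le_mul' hS hS
    _ = ENNReal.ofReal (lam * (2 * Real.exp (-(t / 2)) * (8 / lam * (8 / lam)))) := by
        rw [hAdef, ← ENNReal.ofReal_mul (by positivity), ← ENNReal.ofReal_mul (by positivity),
          ← ENNReal.ofReal_mul hl0.le]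
    _ ≤ ENNReal.ofReal (128 * 4 ^ k * (Nat.factorial k : ℝ) *
          Real.exp (-(1 / 4 * lam ^ (1 - 2 * α₁)))) := by
        apply ENNReal.ofReal_le_ofReal
        rw [← htdef]
        have hexp : Real.exp (-(t / 2)) * Real.exp (t / 4) = Real.exp (-(1 / 4 * t)) := by
          rw [← Real.exp_add]; ring_nf
        have heq : lam * (2 * Real.exp (-(t / 2)) * (8 / lam * (8 / lam))) =
            128 * Real.exp (-(t / 2)) * (1 / lam) := by
          field_simp
          ring
        rw [heq]
        calc 128 * Real.exp (-(t / 2)) * (1 / lam)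
            ≤ 128 * Real.exp (-(t / 2)) * (4 ^ k * (Nat.factorial k : ℝ) * Real.exp (t / 4)) := by
              apply mul_le_mul_of_nonneg_left hinvlam (by positivity)
          _ = 128 * 4 ^ k * (Nat.factorial k : ℝ) * (Real.exp (-(t / 2)) * Real.exp (t / 4)) := by
              ring
          _ = 128 * 4 ^ k * (Nat.factorial k : ℝ) * Real.exp (-(1 / 4 * t)) := by rw [hexp]
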